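/- arXiv:0906.4308 — 3 statements merged into one kernel-verified Lean document; each statement's English description precedes it below -/
import Mathlib

section
/- Let d ≥ 1, let U ⊆ ℝ^d be an open set that is star-shaped with center u ∈ U, and let ω : ℝ^d → (ℝ^d →L[ℝ] ℝ) be continuously differentiable on U. Define g : ℝ^d → ℝ by g(x) = ∫_0^1 ω(u + t·(x−u))(x−u) dt. Then for every x ∈ U, g is differentiable at x and its derivative is the continuous linear map v ↦ ω(x)(v) − ∫_0^1 t·[ (Dω(u + t·(x−u))(x−u))(v) − (Dω(u + t·(x−u))(v))(x−u) ] dt, where Dω(y) denotes the Fréchet derivative of ω at y. (This is the contracting-homotopy identity d∘h_0 + h_1∘d = id of the paper's Lemma 3.6 in degree 1.) -/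
set_option maxHeartbeats 1000000
open MeasureTheory Metric Set ContinuousLinearMap intervalIntegral


/-- **Contracting-homotopy identity in degree 1** (paper Lemma 3.6).
Let `U ⊆ ℝ^d` be open and star-shaped with center `u`, and let `ω` be a `C¹`
1-form on `U`.  The homotopy `g x = ∫_0^1 ω(u + t(x-u))(x-u) dt` is
differentiable at every `x ∈ U`, with derivative
`v ↦ ω x v - ∫_0^1 t [(Dω(u+t(x-u))(x-u))(v) - (Dω(u+t(x-u))(v))(x-u)] dt`. -/
theorem stmt_0 {d : ℕ} (hd : 1 ≤ d) (U : Set (EuclideanSpace ℝ (Fin d)))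
    (hU : IsOpen U) (u : EuclideanSpace ℝ (Fin d)) (hu : u ∈ U)
    (hstar : ∀ x ∈ U, ∀ t ∈ Set.Icc (0 : ℝ) 1, u + t • (x - u) ∈ U)
    (ω : EuclideanSpace ℝ (Fin d) → (EuclideanSpace ℝ (Fin d) →L[ℝ] ℝ))
    (hω : ContDiffOn ℝ 1 ω U)
    (g : EuclideanSpace ℝ (Fin d) → ℝ)
    (hg : ∀ x, g x = ∫ t in (0 : ℝ)..1, ω (u + t • (x - u)) (x - u)) :
    ∀ x ∈ U, ∃ L : EuclideanSpace ℝ (Fin d) →L[ℝ] ℝ,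
      HasFDerivAt g L x ∧
      ∀ v, L v = ω x v - ∫ t in (0 : ℝ)..1,
          t * ((fderiv ℝ ω (u + t • (x - u)) (x - u)) v
               - (fderiv ℝ ω (u + t • (x - u)) v) (x - u)) := by
  intro x hx
  -- basic continuity facts
  have hωc : ContinuousOn ω U := hω.continuousOn
  have hfc : ContinuousOn (fderiv ℝ ω) U := hω.continuousOn_fderiv_of_isOpen hU le_rfl
  have hIsub : Set.uIoc (0:ℝ) 1 ⊆ Set.Icc (0:ℝ) 1 := by
    rw [Set.uIoc_of_le (zero_le_one)]; exact Set.Ioc_subset_Icc_self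
  -- radius
  obtain ⟨ε, εpos, hball⟩ := Metric.isOpen_iff.1 hU x hx
  set r : ℝ := ε / 2 with hr
  have rpos : 0 < r := by positivity
  have hsub : Metric.closedBall x r ⊆ U := fun y hy =>
    hball (lt_of_le_of_lt (Metric.mem_closedBall.1 hy) (by simp [hr]; linarith))
  have hbsub : Metric.ball x r ⊆ U := fun y hy => hsub (Metric.ball_subset_closedBall hy)
  -- γ for general base point
  set γ : EuclideanSpace ℝ (Fin d) → ℝ → EuclideanSpace ℝ (Fin d) :=
    fun x' t => u + t • (x' - u) with hγ
  have hγc : ∀ x', Continuous (γ x') := fun x' => by fun_prop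
  have hmaps : ∀ x' ∈ U, ∀ t ∈ Set.Icc (0:ℝ) 1, γ x' t ∈ U := fun x' hx' t ht =>
    hstar x' hx' t ht
  have hωγ : ∀ x' ∈ U, ContinuousOn (fun t => ω (γ x' t)) (Set.Icc (0:ℝ) 1) :=
    fun x' hx' => hωc.comp (hγc x').continuousOn (hmaps x' hx')
  have hDγ : ∀ x' ∈ U, ContinuousOn (fun t => fderiv ℝ ω (γ x' t)) (Set.Icc (0:ℝ) 1) :=
    fun x' hx' => hfc.comp (hγc x').continuousOn (hmaps x' hx')
  -- the integrand and its x-derivative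
  set F : EuclideanSpace ℝ (Fin d) → ℝ → ℝ := fun x' t => ω (γ x' t) (x' - u) with hF
  set F' : EuclideanSpace ℝ (Fin d) → ℝ → (EuclideanSpace ℝ (Fin d) →L[ℝ] ℝ) :=
    fun x' t => ω (γ x' t) + t • ((fderiv ℝ ω (γ x' t)).flip (x' - u)) with hF'
  -- continuity in t of F' for base points in U
  have hF'cont : ∀ x' ∈ U, ContinuousOn (fun t => F' x' t) (Set.Icc (0:ℝ) 1) := by
    intro x' hx'
    have h1 : ContinuousOn (fun t => (fderiv ℝ ω (γ x' t)).flip) (Set.Icc (0:ℝ) 1) := by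
      have := (ContinuousLinearMap.flipₗᵢ ℝ (EuclideanSpace ℝ (Fin d))
        (EuclideanSpace ℝ (Fin d)) ℝ).continuous.comp_continuousOn (hDγ x' hx')
      exact this
    have h2 : ContinuousOn (fun t => (fderiv ℝ ω (γ x' t)).flip (x' - u)) (Set.Icc (0:ℝ) 1) :=
      h1.clm_apply continuousOn_const
    exact (hωγ x' hx').add (continuousOn_id.smul h2)
  -- differentiability of F in x'
  have hdiff : ∀ t ∈ Set.Icc (0:ℝ) 1, ∀ x' ∈ U,
      HasFDerivAt (fun y => F y t) (F' x' t) x' := by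
    intro t ht x' hx'
    have hyU : γ x' t ∈ U := hmaps x' hx' t ht
    have h1 : HasFDerivAt (fun y : EuclideanSpace ℝ (Fin d) => γ y t)
        (t • ContinuousLinearMap.id ℝ (EuclideanSpace ℝ (Fin d))) x' := by
      simpa [hγ] using (((hasFDerivAt_id (𝕜 := ℝ) x').sub_const u).const_smul t).const_add u
    have hωd : HasFDerivAt ω (fderiv ℝ ω (γ x' t)) (γ x' t) :=
      ((hω.differentiableOn one_ne_zero).differentiableAt (hU.mem_nhds hyU)).hasFDerivAt
    have h2 : HasFDerivAt (fun y => ω (γ y t))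
        ((fderiv ℝ ω (γ x' t)).comp (t • ContinuousLinearMap.id ℝ _)) x' :=
      hωd.comp x' h1
    have h3 : HasFDerivAt (fun y : EuclideanSpace ℝ (Fin d) => y - u)
        (ContinuousLinearMap.id ℝ _) x' := by
      simpa using (hasFDerivAt_id x').sub_const u
    have h4 := h2.clm_apply h3
    refine h4.congr_fderiv ?_
    ext v
    simp [hF', ContinuousLinearMap.smul_apply, mul_comm]
  -- compactness bound
  set K : Set (EuclideanSpace ℝ (Fin d)) :=
    (fun p : ℝ × EuclideanSpace ℝ (Fin d) => u + p.1 • (p.2 - u)) ''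
      (Set.Icc (0:ℝ) 1 ×ˢ Metric.closedBall x r) with hK
  have hKcomp : IsCompact K :=
    ((isCompact_Icc).prod (isCompact_closedBall x r)).image (by fun_prop)
  have hKU : K ⊆ U := by
    rintro _ ⟨⟨t, y⟩, ⟨ht, hy⟩, rfl⟩
    exact hstar y (hsub hy) t ht
  obtain ⟨C1, hC1⟩ := hKcomp.exists_bound_of_continuousOn (hωc.mono hKU)
  obtain ⟨C2, hC2⟩ := hKcomp.exists_bound_of_continuousOn
    (E := EuclideanSpace ℝ (Fin d) →L[ℝ] EuclideanSpace ℝ (Fin d) →L[ℝ] ℝ) (hfc.mono hKU)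
  have huK : u ∈ K := ⟨(0, x), ⟨Set.left_mem_Icc.2 zero_le_one, Metric.mem_closedBall_self rpos.le⟩, by simp⟩
  have hC2nn : 0 ≤ C2 := le_trans (norm_nonneg _) (hC2 u huK)
  set B : ℝ := C1 + C2 * (‖x - u‖ + r) with hB
  have h_bound : ∀ t ∈ Set.uIoc (0:ℝ) 1, ∀ x' ∈ Metric.ball x r, ‖F' x' t‖ ≤ B := by
    intro t ht x' hx'
    have ht' : t ∈ Set.Icc (0:ℝ) 1 := hIsub ht
    have hyK : γ x' t ∈ K := ⟨(t, x'), ⟨ht', Metric.ball_subset_closedBall hx'⟩, rfl⟩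
    have hxu : ‖x' - u‖ ≤ ‖x - u‖ + r := by
      calc ‖x' - u‖ = ‖(x' - x) + (x - u)‖ := by abel_nf
        _ ≤ ‖x' - x‖ + ‖x - u‖ := norm_add_le _ _
        _ ≤ ‖x - u‖ + r := by
            have := Metric.mem_ball.1 hx'
            rw [dist_eq_norm] at this
            linarith
    have hflip : ‖(fderiv ℝ ω (γ x' t)).flip (x' - u)‖ ≤ C2 * (‖x - u‖ + r) := by
      calc ‖(fderiv ℝ ω (γ x' t)).flip (x' - u)‖
          ≤ ‖(fderiv ℝ ω (γ x' t)).flip‖ * ‖x' - u‖ := ContinuousLinearMap.le_opNorm _ _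
        _ = ‖fderiv ℝ ω (γ x' t)‖ * ‖x' - u‖ := by
            rw [ContinuousLinearMap.opNorm_flip]
        _ ≤ C2 * (‖x - u‖ + r) := by
            apply mul_le_mul (hC2 _ hyK) hxu (norm_nonneg _) hC2nn
    calc ‖F' x' t‖ ≤ ‖ω (γ x' t)‖ + ‖t • ((fderiv ℝ ω (γ x' t)).flip (x' - u))‖ :=
          norm_add_le _ _
      _ = ‖ω (γ x' t)‖ + |t| * ‖(fderiv ℝ ω (γ x' t)).flip (x' - u)‖ := by
          rw [norm_smul, Real.norm_eq_abs]
      _ ≤ C1 + 1 * (C2 * (‖x - u‖ + r)) := by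
          gcongr
          · exact hC1 _ hyK
          · rw [abs_le]; constructor <;> [linarith [ht'.1]; exact ht'.2]
      _ = B := by rw [hB]; ring
  -- parametric differentiation under the integral
  have hmain : HasFDerivAt (fun x' => ∫ t in (0:ℝ)..1, F x' t)
      (∫ t in (0:ℝ)..1, F' x t) x := by
    apply intervalIntegral.hasFDerivAt_integral_of_dominated_of_fderiv_le
      (bound := fun _ => B) (s := Metric.ball x r) (Metric.ball_mem_nhds x rpos)
    · filter_upwards [hU.mem_nhds hx] with x' hx'
      exact (((hωγ x' hx').clm_apply continuousOn_const).mono hIsub).aestronglyMeasurable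
        measurableSet_uIoc
    · apply ContinuousOn.intervalIntegrable
      rw [Set.uIcc_of_le zero_le_one]
      exact (hωγ x hx).clm_apply continuousOn_const
    · exact ((hF'cont x hx).mono hIsub).aestronglyMeasurable measurableSet_uIoc
    · exact Filter.Eventually.of_forall h_bound
    · exact intervalIntegrable_const
    · exact Filter.Eventually.of_forall fun t ht x' hx' =>
        hdiff t (hIsub ht) x' (hbsub hx')
  refine ⟨∫ t in (0:ℝ)..1, F' x t, ?_, ?_⟩
  · have hgeq : g = fun x' => ∫ t in (0:ℝ)..1, F x' t := funext hg
    rw [hgeq]; exact hmain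
  · intro v
    have hInt : IntervalIntegrable (fun t => F' x t) volume 0 1 := by
      apply ContinuousOn.intervalIntegrable
      rw [Set.uIcc_of_le zero_le_one]; exact hF'cont x hx
    rw [ContinuousLinearMap.intervalIntegral_apply hInt v]
    -- FTC for f t = t * ω (γ x t) v
    set f : ℝ → ℝ := fun t => t * ω (γ x t) v with hf2
    set f' : ℝ → ℝ := fun t => ω (γ x t) v + t * ((fderiv ℝ ω (γ x t)) (x - u) v) with hf'2
    have hfd : ∀ t ∈ Set.uIcc (0:ℝ) 1, HasDerivAt f (f' t) t := by
      intro t ht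
      rw [Set.uIcc_of_le zero_le_one] at ht
      have hyU : γ x t ∈ U := hmaps x hx t ht
      have hγd : HasDerivAt (fun s : ℝ => γ x s) (x - u) t := by
        simpa [hγ] using ((hasDerivAt_id t).smul_const (x - u)).const_add u
      have hωd : HasFDerivAt ω (fderiv ℝ ω (γ x t)) (γ x t) :=
        ((hω.differentiableOn one_ne_zero).differentiableAt (hU.mem_nhds hyU)).hasFDerivAt
      have h2 : HasDerivAt (fun s => ω (γ x s)) ((fderiv ℝ ω (γ x t)) (x - u)) t :=
        hωd.comp_hasDerivAt t hγd
      have h3 : HasDerivAt (fun s => ω (γ x s) v) ((fderiv ℝ ω (γ x t)) (x - u) v) t := by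
        simpa using h2.clm_apply (hasDerivAt_const t v)
      have h4 := (hasDerivAt_id t).mul h3
      simpa [hf2, hf'2, Pi.mul_def] using h4
    have hf'cont : ContinuousOn f' (Set.Icc (0:ℝ) 1) :=
      ((hωγ x hx).clm_apply continuousOn_const).add (continuousOn_id.mul
        (((hDγ x hx).clm_apply continuousOn_const).clm_apply continuousOn_const))
    have hf'int : IntervalIntegrable f' volume 0 1 := by
      apply ContinuousOn.intervalIntegrable
      rw [Set.uIcc_of_le zero_le_one]; exact hf'cont
    have hFTC : (∫ t in (0:ℝ)..1, f' t) = ω x v := by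
      rw [intervalIntegral.integral_eq_sub_of_hasDerivAt hfd hf'int]
      simp [hf2, hγ]
    -- the remainder term
    set D : ℝ → ℝ := fun t => t * ((fderiv ℝ ω (γ x t) (x - u)) v
        - (fderiv ℝ ω (γ x t) v) (x - u)) with hD2
    have hDcont : ContinuousOn D (Set.Icc (0:ℝ) 1) :=
      continuousOn_id.mul (((((hDγ x hx).clm_apply continuousOn_const).clm_apply
        continuousOn_const)).sub ((((hDγ x hx).clm_apply continuousOn_const).clm_apply
        continuousOn_const)))
    have hDint : IntervalIntegrable D volume 0 1 := by
      apply ContinuousOn.intervalIntegrable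
      rw [Set.uIcc_of_le zero_le_one]; exact hDcont
    have hcongr : (∫ t in (0:ℝ)..1, F' x t v) = ∫ t in (0:ℝ)..1, (f' t - D t) := by
      apply intervalIntegral.integral_congr
      intro t ht
      simp only [hF', hf'2, hD2, ContinuousLinearMap.add_apply,
        ContinuousLinearMap.smul_apply, ContinuousLinearMap.flip_apply, smul_eq_mul]
      ring
    rw [hcongr, intervalIntegral.integral_sub hf'int hDint, hFTC]
end

section
/- Let d ≥ 1, let U ⊆ ℝ^d be an open set that is star-shaped with center u ∈ U, and let ω : ℝ^d → (ℝ^d →L[ℝ] ℝ) be continuously differentiable on U and closed on U, i.e. (Dω(x)(v))(w) = (Dω(x)(w))(v) for all x ∈ U and v, w ∈ ℝ^d. Then the function g(x) = ∫_0^1 ω(u + t·(x−u))(x−u) dt satisfies: for every x ∈ U, g is differentiable at x with Fréchet derivative equal to ω(x). In particular, every closed continuously differentiable 1-form on a star-shaped open subset of ℝ^d is exact (Poincaré lemma, the degree-1 case of the paper's Lemma 3.6(1)). -/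
set_option maxHeartbeats 1000000


/-- **Poincaré lemma in degree 1 on a star-shaped open set** (paper Lemma 3.6(1)).
If `U ⊆ ℝ^d` is open and star-shaped with center `u`, and `ω` is a `C¹` 1-form
on `U` which is closed on `U` (its derivative is symmetric), then
`g x = ∫_0^1 ω(u + t(x-u))(x-u) dt` is a primitive of `ω` on `U`:
at every `x ∈ U`, `g` is differentiable with Fréchet derivative `ω x`.
In particular every closed `C¹` 1-form on a star-shaped open set is exact. -/
theorem stmt_1 {d : ℕ} (hd : 1 ≤ d) (U : Set (EuclideanSpace ℝ (Fin d)))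
    (hU : IsOpen U) (u : EuclideanSpace ℝ (Fin d)) (hu : u ∈ U)
    (hstar : ∀ x ∈ U, ∀ t ∈ Set.Icc (0 : ℝ) 1, u + t • (x - u) ∈ U)
    (ω : EuclideanSpace ℝ (Fin d) → (EuclideanSpace ℝ (Fin d) →L[ℝ] ℝ))
    (hω : ContDiffOn ℝ 1 ω U)
    (hclosed : ∀ x ∈ U, ∀ v w : EuclideanSpace ℝ (Fin d),
        (fderiv ℝ ω x v) w = (fderiv ℝ ω x w) v)
    (g : EuclideanSpace ℝ (Fin d) → ℝ)
    (hg : ∀ x, g x = ∫ t in (0 : ℝ)..1, ω (u + t • (x - u)) (x - u)) :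
    ∀ x ∈ U, HasFDerivAt g (ω x) x := by
  intro x hx
  have hωdiff : ∀ p ∈ U, HasFDerivAt ω (fderiv ℝ ω p) p := fun p hp =>
    ((hω.differentiableOn one_ne_zero).differentiableAt (hU.mem_nhds hp)).hasFDerivAt
  have hωcont : ContinuousOn ω U := hω.continuousOn
  have hDcont : ContinuousOn (fderiv ℝ ω) U := hω.continuousOn_fderiv_of_isOpen hU le_rfl
  -- the segment from u to x is compact and contained in U
  set K : Set (EuclideanSpace ℝ (Fin d)) := (fun t : ℝ => u + t • (x - u)) '' Set.Icc 0 1 with hK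
  have hKcomp : IsCompact K := isCompact_Icc.image (by fun_prop)
  have hKU : K ⊆ U := by rintro _ ⟨t, ht, rfl⟩; exact hstar x hx t ht
  obtain ⟨δ, hδ, hδU⟩ := hKcomp.exists_thickening_subset_open hU hKU
  -- points near the segment stay in U
  have hmem : ∀ t ∈ Set.Icc (0:ℝ) 1, ∀ y : EuclideanSpace ℝ (Fin d),
      dist y x < δ → u + t • (y - u) ∈ U := by
    intro t ht y hy
    apply hδU
    rw [Metric.mem_thickening_iff]
    refine ⟨u + t • (x - u), ⟨t, ht, rfl⟩, ?_⟩
    have h1 : dist (u + t • (y - u)) (u + t • (x - u)) = |t| * dist y x := by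
      simp only [dist_eq_norm]
      rw [show (u + t • (y - u)) - (u + t • (x - u)) = t • (y - x) by
        module, norm_smul, Real.norm_eq_abs]
    rw [h1]
    calc |t| * dist y x ≤ 1 * dist y x := by
          apply mul_le_mul_of_nonneg_right _ dist_nonneg
          rw [abs_le]; constructor <;> linarith [ht.1, ht.2]
      _ = dist y x := one_mul _
      _ < δ := hy
  -- a compact set containing all relevant points, for bounds
  set S : Set (EuclideanSpace ℝ (Fin d)) :=
    (fun p : ℝ × EuclideanSpace ℝ (Fin d) => u + p.1 • (p.2 - u)) ''
      (Set.Icc (0:ℝ) 1 ×ˢ Metric.closedBall x (δ/2)) with hS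
  have hScomp : IsCompact S := (isCompact_Icc.prod (isCompact_closedBall x _)).image (by fun_prop)
  have hSU : S ⊆ U := by
    rintro _ ⟨⟨t, y⟩, ⟨ht, hy⟩, rfl⟩
    exact hmem t ht y (lt_of_le_of_lt (Metric.mem_closedBall.mp hy) (by linarith))
  obtain ⟨M₁, hM₁⟩ := hScomp.exists_bound_of_continuousOn (hωcont.mono hSU)
  obtain ⟨M₂, hM₂⟩ := hScomp.exists_bound_of_continuousOn
    (E := EuclideanSpace ℝ (Fin d) →L[ℝ] EuclideanSpace ℝ (Fin d) →L[ℝ] ℝ) (hDcont.mono hSU)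
  have hSmem : ∀ t ∈ Set.Icc (0:ℝ) 1, ∀ y ∈ Metric.ball x (δ/2),
      u + t • (y - u) ∈ S := by
    intro t ht y hy
    exact ⟨(t, y), ⟨ht, Metric.ball_subset_closedBall hy⟩, rfl⟩
  have huS : u ∈ S := ⟨(0, x), ⟨⟨le_refl 0, zero_le_one⟩,
    Metric.mem_closedBall_self (by linarith)⟩, by simp⟩
  have hM₁0 : 0 ≤ M₁ := le_trans (norm_nonneg _) (hM₁ u huS)
  have hM₂0 : 0 ≤ M₂ := le_trans (norm_nonneg _) (hM₂ u huS)
  -- the integrand and its derivative in the parameter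
  set F : EuclideanSpace ℝ (Fin d) → ℝ → ℝ := fun y t => ω (u + t • (y - u)) (y - u) with hF
  set F' : EuclideanSpace ℝ (Fin d) → ℝ → (EuclideanSpace ℝ (Fin d) →L[ℝ] ℝ) := fun y t =>
    ω (u + t • (y - u)) + t • (fderiv ℝ ω (u + t • (y - u)) (y - u)) with hF'
  -- differentiability of F in y, using closedness
  have key : ∀ t : ℝ, ∀ y : EuclideanSpace ℝ (Fin d), (u + t • (y - u)) ∈ U →
      HasFDerivAt (fun z => F z t) (F' y t) y := by
    intro t y hyU
    have hpath : HasFDerivAt (fun z : EuclideanSpace ℝ (Fin d) => u + t • (z - u))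
        (t • ContinuousLinearMap.id ℝ (EuclideanSpace ℝ (Fin d))) y :=
      (((hasFDerivAt_id y).sub_const u).const_smul t).const_add u
    have h1 : HasFDerivAt (fun z : EuclideanSpace ℝ (Fin d) => ω (u + t • (z - u)))
        ((fderiv ℝ ω (u + t • (y - u))).comp
          (t • ContinuousLinearMap.id ℝ (EuclideanSpace ℝ (Fin d)))) y :=
      (hωdiff _ hyU).comp y hpath
    have h2 : HasFDerivAt (fun z : EuclideanSpace ℝ (Fin d) => z - u)
        (ContinuousLinearMap.id ℝ (EuclideanSpace ℝ (Fin d))) y :=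
      (hasFDerivAt_id y).sub_const u
    have h3 := h1.clm_apply h2
    refine h3.congr_fderiv ?_
    refine ContinuousLinearMap.ext fun v => ?_
    simp only [hF', ContinuousLinearMap.add_apply, ContinuousLinearMap.smul_apply,
      ContinuousLinearMap.coe_comp', Function.comp_apply, ContinuousLinearMap.flip_apply,
      ContinuousLinearMap.coe_id', id_eq, ContinuousLinearMap.coe_smul', Pi.smul_apply,
      map_smul, smul_eq_mul]
    rw [hclosed _ hyU v (y - u)]
  -- continuity of F y in t for y near x
  have hFcont : ∀ y ∈ Metric.ball x (δ/2), ContinuousOn (F y) (Set.Icc (0:ℝ) 1) := by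
    intro y hy
    apply ContinuousOn.clm_apply _ continuousOn_const
    exact hωcont.comp (by fun_prop) (fun t ht => hmem t ht y
      (lt_of_lt_of_le (Metric.mem_ball.mp hy) (by linarith)))
  have hF'cont : ContinuousOn (F' x) (Set.Icc (0:ℝ) 1) := by
    have hpath : ContinuousOn (fun t : ℝ => u + t • (x - u)) (Set.Icc (0:ℝ) 1) := by fun_prop
    have hmemx : ∀ t ∈ Set.Icc (0:ℝ) 1, u + t • (x - u) ∈ U := fun t ht => hstar x hx t ht
    apply ContinuousOn.add (hωcont.comp hpath hmemx)
    exact (continuousOn_id).smul (((hDcont.comp hpath hmemx)).clm_apply continuousOn_const)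
  have hIoc : Set.uIoc (0:ℝ) 1 = Set.Ioc (0:ℝ) 1 := Set.uIoc_of_le zero_le_one
  have hIcc : Set.uIcc (0:ℝ) 1 = Set.Icc (0:ℝ) 1 := Set.uIcc_of_le zero_le_one
  have hδ2 : (0:ℝ) < δ/2 := by linarith
  -- differentiation under the integral sign
  have main := intervalIntegral.hasFDerivAt_integral_of_dominated_of_fderiv_le
    (μ := MeasureTheory.volume) (F := F) (F' := F') (x₀ := x) (a := 0) (b := 1)
    (bound := fun _ => M₁ + M₂ * (δ/2 + ‖x - u‖)) (Metric.ball_mem_nhds x hδ2)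
    (by
      filter_upwards [Metric.ball_mem_nhds x hδ2] with y hy
      rw [hIoc]
      exact ((hFcont y hy).mono Set.Ioc_subset_Icc_self).aestronglyMeasurable measurableSet_Ioc)
    (((hFcont x (Metric.mem_ball_self hδ2)).mono hIcc.le).intervalIntegrable)
    (by
      rw [hIoc]
      exact (hF'cont.mono Set.Ioc_subset_Icc_self).aestronglyMeasurable measurableSet_Ioc)
    (by
      rw [hIoc]
      refine MeasureTheory.ae_of_all _ fun t ht y hy => ?_
      have ht' : t ∈ Set.Icc (0:ℝ) 1 := Set.Ioc_subset_Icc_self ht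
      have hmemS := hSmem t ht' y hy
      refine ContinuousLinearMap.opNorm_le_bound _
        (add_nonneg hM₁0 (mul_nonneg hM₂0 (by positivity))) fun v => ?_
      have habs : |t| ≤ 1 := by rw [abs_le]; constructor <;> linarith [ht'.1, ht'.2]
      have hyu : ‖y - u‖ ≤ δ/2 + ‖x - u‖ := by
        have h := Metric.mem_ball.mp hy
        rw [dist_eq_norm] at h
        calc ‖y - u‖ ≤ ‖y - x‖ + ‖x - u‖ := norm_sub_le_norm_sub_add_norm_sub y x u
          _ ≤ δ/2 + ‖x - u‖ := by linarith
      have e1 : ‖ω (u + t • (y - u)) v‖ ≤ M₁ * ‖v‖ :=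
        le_trans (ContinuousLinearMap.le_opNorm _ _)
          (mul_le_mul_of_nonneg_right (hM₁ _ hmemS) (norm_nonneg _))
      have e2 : ‖fderiv ℝ ω (u + t • (y - u)) (y - u) v‖ ≤ (M₂ * (δ/2 + ‖x - u‖)) * ‖v‖ := by
        have a1 := ContinuousLinearMap.le_opNorm (fderiv ℝ ω (u + t • (y - u)) (y - u)) v
        have a2 := ContinuousLinearMap.le_opNorm (fderiv ℝ ω (u + t • (y - u))) (y - u)
        have a3 := hM₂ _ hmemS
        calc ‖fderiv ℝ ω (u + t • (y - u)) (y - u) v‖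
            ≤ ‖fderiv ℝ ω (u + t • (y - u)) (y - u)‖ * ‖v‖ := a1
          _ ≤ (‖fderiv ℝ ω (u + t • (y - u))‖ * ‖y - u‖) * ‖v‖ :=
              mul_le_mul_of_nonneg_right a2 (norm_nonneg v)
          _ ≤ (M₂ * (δ/2 + ‖x - u‖)) * ‖v‖ :=
              mul_le_mul_of_nonneg_right
                (mul_le_mul a3 hyu (norm_nonneg _) hM₂0) (norm_nonneg v)
      calc ‖F' y t v‖
          = ‖ω (u + t • (y - u)) v + t * (fderiv ℝ ω (u + t • (y - u)) (y - u) v)‖ := by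
            simp only [hF', ContinuousLinearMap.add_apply, ContinuousLinearMap.smul_apply,
              smul_eq_mul]
        _ ≤ ‖ω (u + t • (y - u)) v‖ + |t| * ‖fderiv ℝ ω (u + t • (y - u)) (y - u) v‖ := by
            rw [← Real.norm_eq_abs, ← norm_mul]; exact norm_add_le _ _
        _ ≤ M₁ * ‖v‖ + 1 * ((M₂ * (δ/2 + ‖x - u‖)) * ‖v‖) := by
            refine add_le_add e1 (mul_le_mul habs e2 (norm_nonneg _) zero_le_one)
        _ = (M₁ + M₂ * (δ/2 + ‖x - u‖)) * ‖v‖ := by ring)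
    (intervalIntegrable_const)
    (by
      rw [hIoc]
      refine MeasureTheory.ae_of_all _ fun t ht y hy => ?_
      exact key t y (hmem t (Set.Ioc_subset_Icc_self ht) y
        (lt_of_lt_of_le (Metric.mem_ball.mp hy) (by linarith))))
  -- compute the integral of F' x via the fundamental theorem of calculus
  have hFTC : (∫ t in (0:ℝ)..1, F' x t) = ω x := by
    have hΦ : ∀ t ∈ Set.uIcc (0:ℝ) 1,
        HasDerivAt (fun s : ℝ => s • ω (u + s • (x - u))) (F' x t) t := by
      intro t ht
      rw [hIcc] at ht
      have hcU : u + t • (x - u) ∈ U := hstar x hx t ht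
      have hpath : HasDerivAt (fun s : ℝ => u + s • (x - u)) (x - u) t := by
        have := ((hasDerivAt_id t).smul_const (x - u)).const_add u
        simpa using this
      have hωc : HasDerivAt (fun s : ℝ => ω (u + s • (x - u)))
          (fderiv ℝ ω (u + t • (x - u)) (x - u)) t :=
        (hωdiff _ hcU).comp_hasDerivAt t hpath
      have := (hasDerivAt_id t).smul hωc
      refine this.congr_deriv ?_
      simp only [hF', one_smul, smul_eq_mul, mul_one, id_eq]
      abel
    have hint : IntervalIntegrable (F' x) MeasureTheory.volume 0 1 :=
      (hF'cont.mono hIcc.le).intervalIntegrable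
    rw [intervalIntegral.integral_eq_sub_of_hasDerivAt hΦ hint]
    simp
  have hgfun : g = fun y => ∫ t in (0:ℝ)..1, F y t := funext hg
  rw [hgfun]
  rw [hFTC] at main
  exact main
end

section
/- Let d ≥ 1, u ∈ ℝ^d, k ≥ 1 and m ≥ 0 integers, and let f : ℝ^d → ℝ be of class C^m such that for every j ≤ m the j-th iterated Fréchet derivative of f is bounded on ℝ^d. Define I(f)(x) = ∫_0^1 t^{k−1} f(t·x + (1−t)·u) dt. Then I(f) is of class C^m and for every j ≤ m and every x ∈ ℝ^d, ‖iteratedFDeriv^j (I(f))(x)‖ ≤ sup_{y ∈ ℝ^d} ‖iteratedFDeriv^j f(y)‖. (This is the paper's estimate ‖D^κ I^u_{k−1}(f)‖_∞ ≤ ‖D^κ f‖_∞ in Lemma 3.6(3), showing the operator I^u_{k−1} is continuous in the Fréchet topology given by the seminorms s_m(f) = sup_{|κ| ≤ m} ‖D^κ f‖_∞.) -/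
open MeasureTheory Metric Set Function

set_option maxHeartbeats 1000000
set_option synthInstance.maxHeartbeats 400000

section aux

variable {E F : Type*} [NormedAddCommGroup E] [NormedSpace ℝ E]
  [NormedAddCommGroup F] [NormedSpace ℝ F]

lemma aux_contF (g : E → F) (hg : Continuous g) (u x : E) (c : ℕ) :
    Continuous (fun t : ℝ => t ^ c • g (t • x + (1 - t) • u)) := by
  fun_prop

variable [CompleteSpace F]

lemma aux_hasFDerivAt (g : E → F) (hg : ContDiff ℝ 1 g) (u : E) (c : ℕ) (t : ℝ) (x : E) :
    HasFDerivAt (fun x => t ^ c • g (t • x + (1 - t) • u))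
      ((t ^ c * t) • fderiv ℝ g (t • x + (1 - t) • u)) x := by
  have hA : HasFDerivAt (fun x : E => t • x + (1 - t) • u)
      (t • ContinuousLinearMap.id ℝ E) x :=
    ((hasFDerivAt_id x).const_smul t).add_const _
  have hg' := (hg.differentiable one_ne_zero (t • x + (1 - t) • u)).hasFDerivAt
  have h := (hg'.comp x hA).const_smul (t ^ c)
  convert h using 1
  all_goals (ext v; simp [mul_smul])

lemma key_hasFDerivAt (g : E → F) (hg : ContDiff ℝ 1 g) (u : E) (c : ℕ)
    {C : ℝ} (hC : ∀ y, ‖fderiv ℝ g y‖ ≤ C) (x₀ : E) :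
    HasFDerivAt (fun x => ∫ t in Ioc (0:ℝ) 1, t ^ c • g (t • x + (1 - t) • u))
      (∫ t in Ioc (0:ℝ) 1, (t ^ c * t) • fderiv ℝ g (t • x₀ + (1 - t) • u)) x₀ := by
  refine hasFDerivAt_integral_of_dominated_of_fderiv_le (𝕜 := ℝ)
    (F := fun x t => t ^ c • g (t • x + (1 - t) • u))
    (F' := fun x t => (t ^ c * t) • fderiv ℝ g (t • x + (1 - t) • u))
    (bound := fun _ => C) (ball_mem_nhds x₀ one_pos) ?_ ?_ ?_ ?_ ?_ ?_
  · exact Filter.Eventually.of_forall fun x =>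
      (aux_contF g (hg.continuous) u x c).aestronglyMeasurable
  · exact (aux_contF g (hg.continuous) u x₀ c).integrableOn_Ioc
  · have hcf : Continuous (fderiv ℝ g) := hg.continuous_fderiv one_ne_zero
    have : Continuous (fun t : ℝ => (t ^ c * t) • fderiv ℝ g (t • x₀ + (1 - t) • u)) := by
      fun_prop
    exact this.aestronglyMeasurable
  · filter_upwards [ae_restrict_mem measurableSet_Ioc] with t ht x _
    refine (norm_smul (t ^ c * t) (fderiv ℝ g (t • x + (1 - t) • u))).le.trans ?_
    have h1 : ‖t ^ c * t‖ ≤ 1 := by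
      rw [Real.norm_eq_abs,
        abs_of_nonneg (mul_nonneg (pow_nonneg ht.1.le _) ht.1.le)]
      calc t ^ c * t = t ^ (c + 1) := (pow_succ t c).symm
        _ ≤ 1 := pow_le_one₀ ht.1.le ht.2
    calc ‖t ^ c * t‖ * ‖fderiv ℝ g (t • x + (1 - t) • u)‖ ≤ 1 * C :=
          mul_le_mul h1 (hC _) (norm_nonneg _) one_pos.le
      _ = C := one_mul C
  · exact integrableOn_const (by simp)
  · filter_upwards with t x _
    exact aux_hasFDerivAt g hg u c t x

end aux

lemma isoe_zero {d : ℕ} {α : Type*} [MeasurableSpace α] (μ : Measure α)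
    (φ : α → ℝ) :
    (continuousMultilinearCurryFin0 ℝ (EuclideanSpace ℝ (Fin d)) ℝ).symm (∫ x, φ x ∂μ)
      = ∫ x, (continuousMultilinearCurryFin0 ℝ (EuclideanSpace ℝ (Fin d)) ℝ).symm (φ x) ∂μ :=
  ((continuousMultilinearCurryFin0 ℝ (EuclideanSpace ℝ (Fin d))
    ℝ).symm.toLinearIsometry.integral_comp_comm φ).symm

lemma isoe_succ {d : ℕ} (n : ℕ) {α : Type*} [MeasurableSpace α] (μ : Measure α)
    (φ : α → (EuclideanSpace ℝ (Fin d) →L[ℝ]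
      ContinuousMultilinearMap ℝ (fun _ : Fin n => EuclideanSpace ℝ (Fin d)) ℝ)) :
    (continuousMultilinearCurryLeftEquiv ℝ
        (fun _ : Fin (n + 1) => EuclideanSpace ℝ (Fin d)) ℝ).symm (∫ x, φ x ∂μ)
      = ∫ x, (continuousMultilinearCurryLeftEquiv ℝ
          (fun _ : Fin (n + 1) => EuclideanSpace ℝ (Fin d)) ℝ).symm (φ x) ∂μ := by
  have h := LinearIsometry.integral_comp_comm (𝕜 := ℝ) (μ := μ)
    (LinearIsometryEquiv.toLinearIsometry
      (continuousMultilinearCurryLeftEquiv ℝ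
        (fun _ : Fin (n + 1) => EuclideanSpace ℝ (Fin d)) ℝ).symm) φ
  rw [LinearIsometryEquiv.coe_toLinearIsometry] at h
  exact h.symm

/-- **Continuity of `I^u_{k-1}` in the Fréchet topology** (paper Lemma 3.6(3)):
`‖D^κ I^u_{k-1}(f)‖_∞ ≤ ‖D^κ f‖_∞`.  If `f : ℝ^d → ℝ` is `C^m` with all
iterated derivatives of order `≤ m` bounded, then
`I(f)(x) = ∫_0^1 t^{k-1} f(tx + (1-t)u) dt` is `C^m` and for every `j ≤ m`
and every `x`, `‖D^j(I(f))(x)‖ ≤ sup_y ‖D^j f(y)‖`. -/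
theorem stmt_6 {d : ℕ} (hd : 1 ≤ d) (u : EuclideanSpace ℝ (Fin d))
    (k : ℕ) (hk : 1 ≤ k) (m : ℕ)
    (f : EuclideanSpace ℝ (Fin d) → ℝ) (hf : ContDiff ℝ m f)
    (hbd : ∀ j ≤ m, ∃ C, ∀ y, ‖iteratedFDeriv ℝ j f y‖ ≤ C)
    (If : EuclideanSpace ℝ (Fin d) → ℝ)
    (hIf : ∀ x, If x = ∫ t in (0 : ℝ)..1, t ^ (k - 1) * f (t • x + (1 - t) • u)) :
    ContDiff ℝ m If ∧
    ∀ j ≤ m, ∀ x, ‖iteratedFDeriv ℝ j If x‖ ≤ ⨆ y, ‖iteratedFDeriv ℝ j f y‖ := by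
  have hIf' : ∀ x, If x = ∫ t in Ioc (0:ℝ) 1, t ^ (k - 1) • f (t • x + (1 - t) • u) := by
    intro x
    rw [hIf, intervalIntegral.integral_of_le zero_le_one]
    simp [smul_eq_mul]
  -- main formula for the iterated derivatives
  have main : ∀ n, n ≤ m → ∀ x, iteratedFDeriv ℝ n If x
      = ∫ t in Ioc (0:ℝ) 1, t ^ (k - 1 + n) • iteratedFDeriv ℝ n f (t • x + (1 - t) • u) := by
    intro n
    induction n with
    | zero =>
      intro _ x
      rw [iteratedFDeriv_zero_eq_comp, comp_apply, hIf' x, isoe_zero]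
      refine integral_congr_ae (Filter.Eventually.of_forall fun t => ?_)
      dsimp only
      rw [_root_.map_smul]
      rfl
    | succ n ih =>
      intro hn x
      have hn' : n ≤ m := Nat.le_of_succ_le hn
      have hg : ContDiff ℝ 1 (iteratedFDeriv ℝ n f) := by
        apply hf.iteratedFDeriv_right
        exact_mod_cast (by omega : 1 + n ≤ m)
      obtain ⟨C, hC⟩ := hbd (n + 1) hn
      have hC' : ∀ y, ‖fderiv ℝ (iteratedFDeriv ℝ n f) y‖ ≤ C := fun y => by
        rw [norm_fderiv_iteratedFDeriv]; exact hC y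
      have hder := key_hasFDerivAt (iteratedFDeriv ℝ n f) hg u (k - 1 + n) hC' x
      have heq : iteratedFDeriv ℝ n If = fun x =>
          ∫ t in Ioc (0:ℝ) 1, t ^ (k - 1 + n) • iteratedFDeriv ℝ n f (t • x + (1 - t) • u) :=
        funext (ih hn')
      have hfd : fderiv ℝ (iteratedFDeriv ℝ n If) x
          = ∫ t in Ioc (0:ℝ) 1,
              (t ^ (k - 1 + n) * t) • fderiv ℝ (iteratedFDeriv ℝ n f) (t • x + (1 - t) • u) := by
        rw [heq]; exact hder.fderiv
      have hsucc := congrFun (iteratedFDeriv_succ_eq_comp_left (𝕜 := ℝ) (n := n) (f := If)) x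
      rw [hsucc, comp_apply, hfd, isoe_succ]
      refine integral_congr_ae (Filter.Eventually.of_forall fun t => ?_)
      dsimp only
      rw [_root_.map_smul]
      have h2 := congrFun (iteratedFDeriv_succ_eq_comp_left (𝕜 := ℝ) (n := n) (f := f))
        (t • x + (1 - t) • u)
      rw [comp_apply] at h2
      rw [show (k - 1 + (n + 1)) = (k - 1 + n) + 1 by ring, pow_succ]
      exact congrArg _ h2.symm
  constructor
  · rw [contDiff_nat_iff_continuous_differentiable]
    constructor
    · intro n hn
      rw [funext (main n hn)]
      obtain ⟨C, hC⟩ := hbd n hn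
      have hC0 : 0 ≤ C := le_trans (norm_nonneg _) (hC u)
      have hcont : Continuous (iteratedFDeriv ℝ n f) :=
        hf.continuous_iteratedFDeriv (by exact_mod_cast hn)
      apply continuous_of_dominated (bound := fun _ => C)
      · exact fun x => (aux_contF _ hcont u x (k - 1 + n)).aestronglyMeasurable
      · intro x
        filter_upwards [ae_restrict_mem measurableSet_Ioc] with t ht
        refine (norm_smul (t ^ (k - 1 + n))
          (iteratedFDeriv ℝ n f (t • x + (1 - t) • u))).le.trans ?_
        have h1 : ‖t ^ (k - 1 + n)‖ ≤ 1 := by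
          rw [Real.norm_eq_abs, abs_of_nonneg (pow_nonneg ht.1.le _)]
          exact pow_le_one₀ ht.1.le ht.2
        calc ‖t ^ (k - 1 + n)‖ * ‖iteratedFDeriv ℝ n f (t • x + (1 - t) • u)‖ ≤ 1 * C :=
              mul_le_mul h1 (hC _) (norm_nonneg _) one_pos.le
          _ = C := one_mul C
      · exact integrableOn_const (by simp)
      · filter_upwards with t
        fun_prop
    · intro n hn
      rw [funext (main n hn.le)]
      obtain ⟨C, hC⟩ := hbd (n + 1) hn
      have hg : ContDiff ℝ 1 (iteratedFDeriv ℝ n f) := by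
        apply hf.iteratedFDeriv_right
        exact_mod_cast (by omega : 1 + n ≤ m)
      have hC' : ∀ y, ‖fderiv ℝ (iteratedFDeriv ℝ n f) y‖ ≤ C := fun y => by
        rw [norm_fderiv_iteratedFDeriv]; exact hC y
      exact fun x =>
        (key_hasFDerivAt (iteratedFDeriv ℝ n f) hg u (k - 1 + n) hC' x).differentiableAt
  · intro j hj x
    rw [main j hj x]
    obtain ⟨C, hC⟩ := hbd j hj
    have hbdd : BddAbove (Set.range fun y => ‖iteratedFDeriv ℝ j f y‖) :=
      ⟨C, by rintro _ ⟨y, rfl⟩; exact hC y⟩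
    have hle : ∀ y, ‖iteratedFDeriv ℝ j f y‖ ≤ ⨆ y, ‖iteratedFDeriv ℝ j f y‖ :=
      fun y => le_ciSup hbdd y
    have hIoc : (volume (Ioc (0:ℝ) 1)).toReal = 1 := by simp
    calc ‖∫ t in Ioc (0:ℝ) 1, t ^ (k - 1 + j) • iteratedFDeriv ℝ j f (t • x + (1 - t) • u)‖
        ≤ (⨆ y, ‖iteratedFDeriv ℝ j f y‖) * (volume (Ioc (0:ℝ) 1)).toReal := by
          apply norm_setIntegral_le_of_norm_le_const_ae' (by simp)
          refine Filter.Eventually.of_forall fun t ht => ?_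
          refine (norm_smul (t ^ (k - 1 + j))
            (iteratedFDeriv ℝ j f (t • x + (1 - t) • u))).le.trans ?_
          have h1 : ‖t ^ (k - 1 + j)‖ ≤ 1 := by
            rw [Real.norm_eq_abs, abs_of_nonneg (pow_nonneg ht.1.le _)]
            exact pow_le_one₀ ht.1.le ht.2
          calc ‖t ^ (k - 1 + j)‖ * ‖iteratedFDeriv ℝ j f (t • x + (1 - t) • u)‖
              ≤ 1 * (⨆ y, ‖iteratedFDeriv ℝ j f y‖) :=
                mul_le_mul h1 (hle _) (norm_nonneg _) one_pos.le
            _ = _ := one_mul _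
      _ = ⨆ y, ‖iteratedFDeriv ℝ j f y‖ := by rw [hIoc, mul_one]
end
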